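/- For any multiplicative functions f, g, h from the positive integers to the closed unit disc, and any 1 ≤ y ≤ x, the pretentious distance satisfies the triangle inequality: D(f,g;y;x) + D(g,h;y;x) ≥ D(f,h;y;x), where D(f,g;y;x) = (∑_{y ≤ p ≤ x, p prime} (1 - Re(f(p) conj(g(p))))/p)^{1/2}. -/

import Mathlib

open Finset

private lemma det_aux (x1 y1 x2 y2 x3 y3 : ℝ) (h1 : x1^2+y1^2 ≤ 1) (h2 : x2^2+y2^2 ≤ 1)
    (h3 : x3^2+y3^2 ≤ 1) :
    0 ≤ 1 + 2*(x1*x2+y1*y2)*(x2*x3+y2*y3)*(x1*x3+y1*y3)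
      - (x1*x2+y1*y2)^2 - (x2*x3+y2*y3)^2 - (x1*x3+y1*y3)^2 := by
  nlinarith [sq_nonneg (x1*y2-x2*y1), sq_nonneg (x2*y3-x3*y2), sq_nonneg (x1*y3-x3*y1),
    mul_nonneg (mul_nonneg (sub_nonneg.2 h1) (sub_nonneg.2 h2)) (sub_nonneg.2 h3),
    mul_nonneg (sub_nonneg.2 h1) (sq_nonneg (x2*y3-x3*y2)),
    mul_nonneg (sub_nonneg.2 h2) (sq_nonneg (x1*y3-x3*y1)),
    mul_nonneg (sub_nonneg.2 h3) (sq_nonneg (x1*y2-x2*y1)),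
    mul_nonneg (mul_nonneg (sub_nonneg.2 h1) (sub_nonneg.2 h2)) (sq_nonneg x3),
    mul_nonneg (mul_nonneg (sub_nonneg.2 h1) (sub_nonneg.2 h2)) (sq_nonneg y3),
    mul_nonneg (mul_nonneg (sub_nonneg.2 h1) (sub_nonneg.2 h3)) (sq_nonneg x2),
    mul_nonneg (mul_nonneg (sub_nonneg.2 h1) (sub_nonneg.2 h3)) (sq_nonneg y2),
    mul_nonneg (mul_nonneg (sub_nonneg.2 h2) (sub_nonneg.2 h3)) (sq_nonneg x1),
    mul_nonneg (mul_nonneg (sub_nonneg.2 h2) (sub_nonneg.2 h3)) (sq_nonneg y1)]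

private lemma sqrt_aux (A B C : ℝ) (hA : |A| ≤ 1) (hB : |B| ≤ 1) (hC : |C| ≤ 1)
    (hdet : 0 ≤ 1 + 2*A*B*C - A^2 - B^2 - C^2) :
    Real.sqrt (1-C) ≤ Real.sqrt (1-A) + Real.sqrt (1-B) := by
  have hA1 : A ≤ 1 := (abs_le.1 hA).2
  have hB1 : B ≤ 1 := (abs_le.1 hB).2
  have hC1 : C ≤ 1 := (abs_le.1 hC).2
  have hAn : (0:ℝ) ≤ 1 - A := by linarith
  have hBn : (0:ℝ) ≤ 1 - B := by linarith
  have hsq : (A+B-C-1)^2 ≤ 4*((1-A)*(1-B)) := by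
    nlinarith [mul_nonneg hAn hBn, hdet, (abs_le.1 hA).1, (abs_le.1 hB).1, (abs_le.1 hC).1]
  have hkey : 1 - C ≤ (Real.sqrt (1-A) + Real.sqrt (1-B))^2 := by
    have e : (Real.sqrt (1-A) + Real.sqrt (1-B))^2
        = (1-A) + (1-B) + 2*(Real.sqrt (1-A) * Real.sqrt (1-B)) := by
      rw [add_sq, Real.sq_sqrt hAn, Real.sq_sqrt hBn]; ring
    have h2 : A+B-C-1 ≤ 2*(Real.sqrt (1-A) * Real.sqrt (1-B)) := by
      rw [← Real.sqrt_mul hAn]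
      calc A+B-C-1 ≤ |A+B-C-1| := le_abs_self _
        _ = Real.sqrt ((A+B-C-1)^2) := (Real.sqrt_sq_eq_abs _).symm
        _ ≤ Real.sqrt (4*((1-A)*(1-B))) := Real.sqrt_le_sqrt hsq
        _ = 2 * Real.sqrt ((1-A)*(1-B)) := by
            rw [show (4:ℝ) = 2^2 by norm_num, Real.sqrt_mul (by positivity),
              Real.sqrt_sq (by norm_num : (0:ℝ) ≤ 2)]
    rw [e]; linarith
  calc Real.sqrt (1-C) ≤ Real.sqrt ((Real.sqrt (1-A) + Real.sqrt (1-B))^2) :=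
        Real.sqrt_le_sqrt hkey
    _ = Real.sqrt (1-A) + Real.sqrt (1-B) := Real.sqrt_sq (by positivity)

private lemma abs_re_aux (z w : ℂ) (hz : ‖z‖ ≤ 1) (hw : ‖w‖ ≤ 1) :
    |(z * (starRingEnd ℂ) w).re| ≤ 1 := by
  calc |(z * (starRingEnd ℂ) w).re| ≤ ‖z * (starRingEnd ℂ) w‖ :=
        Complex.abs_re_le_norm _
    _ = ‖z‖ * ‖w‖ := by rw [norm_mul, Complex.norm_conj]
    _ ≤ 1 := mul_le_one₀ hz (norm_nonneg _) hw

private lemma norm_sq_aux (z : ℂ) (hz : ‖z‖ ≤ 1) : z.re^2 + z.im^2 ≤ 1 := by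
  have := Complex.sq_norm z
  rw [Complex.normSq_apply] at this
  nlinarith [norm_nonneg z]

/-- pointwise triangle inequality -/
private lemma point_aux (z w u : ℂ) (hz : ‖z‖ ≤ 1) (hw : ‖w‖ ≤ 1)
    (hu : ‖u‖ ≤ 1) :
    Real.sqrt (1 - (z * (starRingEnd ℂ) u).re) ≤
      Real.sqrt (1 - (z * (starRingEnd ℂ) w).re) +
      Real.sqrt (1 - (w * (starRingEnd ℂ) u).re) := by
  apply sqrt_aux _ _ _ (abs_re_aux z w hz hw) (abs_re_aux w u hw hu) (abs_re_aux z u hz hu)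
  have e : ∀ a b : ℂ, (a * (starRingEnd ℂ) b).re = a.re*b.re + a.im*b.im := by
    intro a b; simp [Complex.mul_re]
  rw [e, e, e]
  exact det_aux z.re z.im w.re w.im u.re u.im (norm_sq_aux z hz) (norm_sq_aux w hw)
    (norm_sq_aux u hu)

/-- Pretentious distance triangle inequality for multiplicative functions bounded by 1. -/
theorem pretentious_distance_triangle
    (f g h : ℕ → ℂ)
    (hf1 : f 1 = 1) (hg1 : g 1 = 1) (hh1 : h 1 = 1)
    (hfmul : ∀ m n, Nat.Coprime m n → f (m * n) = f m * f n)
    (hgmul : ∀ m n, Nat.Coprime m n → g (m * n) = g m * g n)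
    (hhmul : ∀ m n, Nat.Coprime m n → h (m * n) = h m * h n)
    (hfb : ∀ n, ‖f n‖ ≤ 1)
    (hgb : ∀ n, ‖g n‖ ≤ 1)
    (hhb : ∀ n, ‖h n‖ ≤ 1)
    (D : (ℕ → ℂ) → (ℕ → ℂ) → ℕ → ℕ → ℝ)
    (hD : ∀ F G y x, D F G y x =
      Real.sqrt (∑ p ∈ (Finset.Icc y x).filter Nat.Prime,
        (1 - (F p * (starRingEnd ℂ) (G p)).re) / p))
    (y x : ℕ) (hy : 1 ≤ y) (hyx : y ≤ x) :
    D f h y x ≤ D f g y x + D g h y x := by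
  rw [hD, hD, hD]
  set s := (Finset.Icc y x).filter Nat.Prime with hs
  set a : ℕ → ℝ := fun p => Real.sqrt ((1 - (f p * (starRingEnd ℂ) (g p)).re) / p) with ha
  set b : ℕ → ℝ := fun p => Real.sqrt ((1 - (g p * (starRingEnd ℂ) (h p)).re) / p) with hb
  set c : ℕ → ℝ := fun p => Real.sqrt ((1 - (f p * (starRingEnd ℂ) (h p)).re) / p) with hc
  have hnn : ∀ (F G : ℕ → ℂ), (∀ n, ‖F n‖ ≤ 1) → (∀ n, ‖G n‖ ≤ 1) →
      ∀ p : ℕ, 0 ≤ (1 - (F p * (starRingEnd ℂ) (G p)).re) / p := by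
    intro F G hF hG p
    apply div_nonneg _ (Nat.cast_nonneg p)
    have := abs_re_aux (F p) (G p) (hF p) (hG p)
    linarith [(abs_le.1 this).2]
  have hea : ∀ p ∈ s, (1 - (f p * (starRingEnd ℂ) (g p)).re) / p = a p ^ 2 :=
    fun p _ => (Real.sq_sqrt (hnn f g hfb hgb p)).symm
  have heb : ∀ p ∈ s, (1 - (g p * (starRingEnd ℂ) (h p)).re) / p = b p ^ 2 :=
    fun p _ => (Real.sq_sqrt (hnn g h hgb hhb p)).symm
  have hec : ∀ p ∈ s, (1 - (f p * (starRingEnd ℂ) (h p)).re) / p = c p ^ 2 :=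
    fun p _ => (Real.sq_sqrt (hnn f h hfb hhb p)).symm
  rw [Finset.sum_congr rfl hea, Finset.sum_congr rfl heb, Finset.sum_congr rfl hec]
  -- pointwise
  have hpt : ∀ p ∈ s, c p ≤ a p + b p := by
    intro p hp
    have hprime : Nat.Prime p := (Finset.mem_filter.1 hp).2
    have hps : (0:ℝ) < Real.sqrt p := Real.sqrt_pos.2 (by exact_mod_cast hprime.pos)
    have e : ∀ (F G : ℕ → ℂ), (∀ n, ‖F n‖ ≤ 1) → (∀ n, ‖G n‖ ≤ 1) →
        Real.sqrt ((1 - (F p * (starRingEnd ℂ) (G p)).re) / p)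
        = Real.sqrt (1 - (F p * (starRingEnd ℂ) (G p)).re) / Real.sqrt p := by
      intro F G hF hG
      apply Real.sqrt_div
      have := abs_re_aux (F p) (G p) (hF p) (hG p)
      linarith [(abs_le.1 this).2]
    simp only [ha, hb, hc]
    rw [e f h hfb hhb, e f g hfb hgb, e g h hgb hhb, ← add_div]
    exact (div_le_div_iff_of_pos_right hps).2 (point_aux (f p) (g p) (h p) (hfb p) (hgb p) (hhb p))
  -- sum manipulation
  have hCS : ∑ p ∈ s, a p * b p ≤
      Real.sqrt (∑ p ∈ s, a p ^ 2) * Real.sqrt (∑ p ∈ s, b p ^ 2) :=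
    Real.sum_mul_le_sqrt_mul_sqrt s a b
  have hsum : ∑ p ∈ s, c p ^ 2 ≤
      (Real.sqrt (∑ p ∈ s, a p ^ 2) + Real.sqrt (∑ p ∈ s, b p ^ 2))^2 := by
    have h1 : ∑ p ∈ s, c p ^ 2 ≤ ∑ p ∈ s, (a p + b p)^2 := by
      apply Finset.sum_le_sum
      intro p hp
      have := hpt p hp
      have hc0 : 0 ≤ c p := Real.sqrt_nonneg _
      nlinarith
    have h2 : ∑ p ∈ s, (a p + b p)^2 = ∑ p ∈ s, a p ^2 + ∑ p ∈ s, b p^2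
        + 2 * ∑ p ∈ s, a p * b p := by
      rw [Finset.mul_sum, ← Finset.sum_add_distrib, ← Finset.sum_add_distrib]
      apply Finset.sum_congr rfl; intros; ring
    have h3 : (Real.sqrt (∑ p ∈ s, a p ^ 2) + Real.sqrt (∑ p ∈ s, b p ^ 2))^2
        = ∑ p ∈ s, a p ^2 + ∑ p ∈ s, b p^2
          + 2 * (Real.sqrt (∑ p ∈ s, a p ^ 2) * Real.sqrt (∑ p ∈ s, b p ^ 2)) := by
      rw [add_sq, Real.sq_sqrt (Finset.sum_nonneg fun p _ => sq_nonneg _),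
        Real.sq_sqrt (Finset.sum_nonneg fun p _ => sq_nonneg _)]
      ring
    rw [h3]; rw [h2] at h1; linarith
  calc Real.sqrt (∑ p ∈ s, c p ^ 2)
      ≤ Real.sqrt ((Real.sqrt (∑ p ∈ s, a p ^ 2) + Real.sqrt (∑ p ∈ s, b p ^ 2))^2) :=
        Real.sqrt_le_sqrt hsum
    _ = _ := Real.sqrt_sq (by positivity)
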